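/- Let (T, η, μ) be a monad on the category of sets and (A, e : TA → A) a T-algebra. Then (A, e) is indiscrete if and only if the partial evaluation relation on TA is an equivalence relation. Moreover, in this case the partial evaluation relation equals the kernel pair of e, i.e. t₁ is a partial evaluation of t₀ if and only if e(t₀) = e(t₁). -/

import Mathlib

open CategoryTheory

universe u

/-- A `T`-algebra `(A, e)` is indiscrete if and only if the partial evaluation
relation on `TA` is an equivalence relation; in that case the partial evaluation
relation is the kernel pair of `e`. -/
theorem indiscrete_iff_partial_evaluation_equivalence
    (T : CategoryTheory.Monad (Type u)) (A : T.Algebra) :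
    ((∀ t₀ t₁ : T.obj A.A, A.a t₀ = A.a t₁ →
        ∃ τ : T.obj (T.obj A.A), T.μ.app A.A τ = t₀ ∧ T.map A.a τ = t₁)
      ↔
      Equivalence (fun t₀ t₁ : T.obj A.A =>
        ∃ τ : T.obj (T.obj A.A), T.μ.app A.A τ = t₀ ∧ T.map A.a τ = t₁))
    ∧
    ((∀ t₀ t₁ : T.obj A.A, A.a t₀ = A.a t₁ →
        ∃ τ : T.obj (T.obj A.A), T.μ.app A.A τ = t₀ ∧ T.map A.a τ = t₁) →
      ∀ t₀ t₁ : T.obj A.A,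
        (∃ τ : T.obj (T.obj A.A), T.μ.app A.A τ = t₀ ∧ T.map A.a τ = t₁)
          ↔ A.a t₀ = A.a t₁) := by
  set R : T.obj A.A → T.obj A.A → Prop := fun t₀ t₁ =>
    ∃ τ : T.obj (T.obj A.A), T.μ.app A.A τ = t₀ ∧ T.map A.a τ = t₁ with hR
  -- partial evaluation preserves e
  have ker : ∀ t₀ t₁, R t₀ t₁ → A.a t₀ = A.a t₁ := by
    rintro t₀ t₁ ⟨τ, h0, h1⟩
    have := types_congr_hom A.assoc τ
    simp only [types_comp_apply] at this
    rw [← h0, ← h1, ← this]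
  -- reflexivity always holds
  have refl : ∀ t, R t t := by
    intro t
    refine ⟨T.map (T.η.app A.A) t, ?_, ?_⟩
    · have := types_congr_hom (T.right_unit A.A) t
      exact this
    · have : T.map (T.η.app A.A) ≫ T.map A.a = 𝟙 _ := by
        rw [← T.map_comp, A.unit]; exact T.map_id _
      simpa using types_congr_hom this t
  -- t is related to η (e t)
  have base : ∀ t, R t (T.η.app A.A (A.a t)) := by
    intro t
    refine ⟨T.η.app (T.obj A.A) t, ?_, ?_⟩
    · have := types_congr_hom (T.left_unit A.A) t
      exact this
    · have := types_congr_hom (T.η.naturality A.a) t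
      simpa using this.symm
  constructor
  · constructor
    · intro ind
      refine ⟨refl, ?_, ?_⟩
      · intro t₀ t₁ h
        exact ind t₁ t₀ (ker _ _ h).symm
      · intro t₀ t₁ t₂ h h'
        exact ind t₀ t₂ ((ker _ _ h).trans (ker _ _ h'))
    · intro eqv t₀ t₁ he
      have h0 := base t₀
      have h1 := eqv.symm (base t₁)
      rw [← he] at h1
      exact eqv.trans h0 h1
  · intro ind t₀ t₁
    exact ⟨ker t₀ t₁, ind t₀ t₁⟩
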